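/- arXiv:0812.1134 — 2 statements merged into one kernel-verified Lean document; each statement's English description precedes it below -/
import Mathlib

section
/- Assume additionally (iii): C(A) ∩ ℤ^r equals the set of ℤ_{≥0}-linear combinations of a_1, …, a_N. Let α ∈ ℤ^r and p a prime. Let β_1/p, …, β_σ/p be all the apexpoints of K_{α/p} = (α/p + ℤ^r) ∩ C(A), and for each i let Γ_i = {l ∈ ℤ_{≥0}^N : ψ(l) = β_i} and Ψ_i = Σ_{l ∈ Γ_i} (l_1!⋯l_N!)^{-1} v^l ∈ F_p[v_1, …, v_N] (all coordinates of each l ∈ Γ_i are < p, so the factorials are invertible mod p). Then every mod-p solution P ∈ F_p[v_1, …, v_N] of the A-hypergeometric system with parameters (A, α) is an F_p[v_1^p, …, v_N^p]-linear combination of Ψ_1, …, Ψ_σ. -/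
/-- The cone `C(A)` of nonnegative real linear combinations of the integer vectors `a i`. -/
def coneOf {r N : ℕ} (a : Fin N → Fin r → ℤ) : Set (Fin r → ℝ) :=
  {x | ∃ c : Fin N → ℝ, (∀ i, 0 ≤ c i) ∧ x = ∑ i, c i • fun j => (a i j : ℝ)}

/-- `K_α = (α + ℤ^r) ∩ C(A)`. -/
def Kset {r N : ℕ} (a : Fin N → Fin r → ℤ) (α : Fin r → ℝ) : Set (Fin r → ℝ) :=
  {x | (∃ m : Fin r → ℤ, x = fun j => α j + (m j : ℝ)) ∧ x ∈ coneOf a}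

/-- `p ∈ K_α` is an apexpoint if `p ∉ q + C(A)` for every `q ∈ K_α` with `q ≠ p`. -/
def IsApex {r N : ℕ} (a : Fin N → Fin r → ℤ) (α : Fin r → ℝ) (p : Fin r → ℝ) : Prop :=
  p ∈ Kset a α ∧ ∀ q ∈ Kset a α, q ≠ p → p - q ∉ coneOf a

/-- The differential operator `∏ i ∂_i^(u i)` on `F_p[v_1,…,v_N]`. -/
noncomputable def derivMonomial (p N : ℕ) (u : Fin N → ℕ) :
    Module.End (ZMod p) (MvPolynomial (Fin N) (ZMod p)) :=
  (List.ofFn fun i : Fin N =>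
    (((MvPolynomial.pderiv i).toLinearMap :
        Module.End (ZMod p) (MvPolynomial (Fin N) (ZMod p))) ^ (u i))).prod

/-- `Φ ∈ F_p[v_1,…,v_N]` is a mod-`p` solution of the A-hypergeometric system with
parameters `(A, α)`. -/
def IsModpSolution {r N : ℕ} (p : ℕ) (a : Fin N → Fin r → ℤ) (α : Fin r → ℤ)
    (Φ : MvPolynomial (Fin N) (ZMod p)) : Prop :=
  (∀ l : Fin N → ℤ, (∑ i, l i • a i) = 0 →
      derivMonomial p N (fun i => (l i).toNat) Φ =
      derivMonomial p N (fun i => (-l i).toNat) Φ) ∧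
  (∀ j : Fin r,
      (∑ k, (a k j : ZMod p) • (MvPolynomial.X k * MvPolynomial.pderiv k Φ)) =
        (α j : ZMod p) • Φ)


-- ===== auxiliary development =====

open MvPolynomial Finsupp

section Part1
variable {p N : ℕ}

noncomputable def Uof {N : ℕ} (u : Fin N → ℕ) : Fin N →₀ ℕ := Finsupp.equivFunOnFinite.symm u

@[simp] lemma Uof_apply (u : Fin N → ℕ) (k : Fin N) : Uof u k = u k := rfl

noncomputable def pe (p N : ℕ) (i : Fin N) :
    Module.End (ZMod p) (MvPolynomial (Fin N) (ZMod p)) :=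
  (MvPolynomial.pderiv i).toLinearMap

lemma pe_pow_monomial (i : Fin N) (n : ℕ) (s : Fin N →₀ ℕ) (c : ZMod p) :
    ((pe p N i) ^ n) (monomial s c) =
      monomial (s - Finsupp.single i n) (((s i).descFactorial n : ZMod p) * c) := by
  induction n generalizing s c with
  | zero => simp
  | succ n ih =>
      rw [pow_succ, Module.End.mul_apply]
      have h1 : (pe p N i) (monomial s c) = monomial (s - single i 1) (c * s i) := by
        simp [pe]
      rw [h1, ih]
      have h2 : (s - single i 1 : Fin N →₀ ℕ) i = s i - 1 := by
        rw [Finsupp.tsub_apply, Finsupp.single_apply]; simp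
      have h3 : s - single i 1 - single i n = s - single i (n + 1) := by
        rw [tsub_tsub, ← Finsupp.single_add, add_comm 1 n]
      rw [h2, h3]
      congr 1
      have h4 : (s i).descFactorial (n + 1) = s i * (s i - 1).descFactorial n := by
        cases hsi : s i with
        | zero => simp [Nat.zero_descFactorial_succ]
        | succ m => rw [Nat.succ_descFactorial_succ]; simp
      rw [h4]
      push_cast
      ring

end Part1

section Part2
variable {p N : ℕ}

lemma sum_single_apply_zero (u : Fin N → ℕ) (t : List (Fin N)) (a : Fin N) (ha : a ∉ t) :
    ((t.map fun i => Finsupp.single i (u i)).sum : Fin N →₀ ℕ) a = 0 := by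
  induction t with
  | nil => simp
  | cons b tb ihb =>
      simp only [List.mem_cons, not_or] at ha
      rw [List.map_cons, List.sum_cons, Finsupp.add_apply, Finsupp.single_apply,
        if_neg (fun h => ha.1 h.symm), ihb ha.2, add_zero]

lemma list_prod_pe_monomial (u : Fin N → ℕ) (l : List (Fin N)) (hl : l.Nodup)
    (s : Fin N →₀ ℕ) (c : ZMod p) :
    ((l.map fun i => pe p N i ^ u i).prod) (monomial s c) =
      monomial (s - (l.map fun i => Finsupp.single i (u i)).sum)
        ((l.map fun i => ((s i).descFactorial (u i) : ZMod p)).prod * c) := by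
  induction l with
  | nil => simp
  | cons a t ih =>
      obtain ⟨ha, ht⟩ := List.nodup_cons.mp hl
      simp only [List.map_cons, List.prod_cons, List.sum_cons, Module.End.mul_apply]
      rw [ih ht, pe_pow_monomial]
      have hta : (s - (t.map fun i => Finsupp.single i (u i)).sum : Fin N →₀ ℕ) a = s a := by
        rw [Finsupp.tsub_apply, sum_single_apply_zero u t a ha, Nat.sub_zero]
      rw [hta, tsub_tsub,
        add_comm ((t.map fun i => Finsupp.single i (u i)).sum) (Finsupp.single a (u a)),
        mul_assoc]

lemma derivMonomial_monomial (u : Fin N → ℕ) (s : Fin N →₀ ℕ) (c : ZMod p) :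
    derivMonomial p N u (monomial s c) =
      monomial (s - Uof u) ((∏ k, ((s k).descFactorial (u k) : ZMod p)) * c) := by
  have h0 : derivMonomial p N u =
      ((List.finRange N).map fun i => pe p N i ^ u i).prod := by
    rw [derivMonomial, List.ofFn_eq_map]; rfl
  rw [h0, list_prod_pe_monomial u _ (List.nodup_finRange N)]
  have h1 : (((List.finRange N).map fun i => Finsupp.single i (u i)).sum : Fin N →₀ ℕ)
      = Uof u := by
    rw [← Fin.sum_univ_def]
    ext k
    rw [Finsupp.finset_sum_apply]
    simp [Finsupp.single_apply]
  rw [h1, ← Fin.prod_univ_def]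

end Part2

section Part3
variable {p N : ℕ}

lemma coeff_derivMonomial (u : Fin N → ℕ) (Φ : MvPolynomial (Fin N) (ZMod p))
    (e : Fin N →₀ ℕ) :
    (derivMonomial p N u Φ).coeff e =
      (∏ k, ((e k + u k).descFactorial (u k) : ZMod p)) * Φ.coeff (e + Uof u) := by
  conv_lhs => rw [Φ.as_sum]
  rw [map_sum]
  rw [MvPolynomial.coeff_sum]
  have key : ∀ d ∈ Φ.support,
      d ≠ e + Uof u → (derivMonomial p N u (monomial d (Φ.coeff d))).coeff e = 0 := by
    intro d _ hd
    rw [derivMonomial_monomial, coeff_monomial]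
    by_cases hle : Uof u ≤ d
    · rw [if_neg]
      intro h
      exact hd (by rw [← h, tsub_add_cancel_of_le hle])
    · rw [Finsupp.le_def, not_forall] at hle
      obtain ⟨k, hk⟩ := hle
      push_neg at hk
      rw [Uof_apply] at hk
      have hz : ((d k).descFactorial (u k) : ZMod p) = 0 := by
        rw [Nat.descFactorial_eq_zero_iff_lt.mpr hk]; exact Nat.cast_zero
      rw [Finset.prod_eq_zero (Finset.mem_univ k) hz, zero_mul, ite_self]
  rw [Finset.sum_eq_single (e + Uof u) key]
  · rw [derivMonomial_monomial, coeff_monomial, if_pos (add_tsub_cancel_right e (Uof u))]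
    have hpr : (∏ k, (((e + Uof u) k).descFactorial (u k) : ZMod p))
        = ∏ k, ((e k + u k).descFactorial (u k) : ZMod p) :=
      Finset.prod_congr rfl fun k _ => by rw [Finsupp.add_apply, Uof_apply]
    rw [hpr]
  · intro h
    rw [MvPolynomial.notMem_support_iff.mp h, map_zero, map_zero, MvPolynomial.coeff_zero]

lemma coeff_X_mul_pderiv (k : Fin N) (Φ : MvPolynomial (Fin N) (ZMod p)) (d : Fin N →₀ ℕ) :
    (X k * MvPolynomial.pderiv k Φ).coeff d = (d k : ZMod p) * Φ.coeff d := by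
  conv_lhs => rw [Φ.as_sum]
  rw [map_sum, Finset.mul_sum, MvPolynomial.coeff_sum]
  have key : ∀ s ∈ Φ.support, s ≠ d →
      (X k * MvPolynomial.pderiv k (monomial s (Φ.coeff s))).coeff d = 0 := by
    intro s _ hs
    rw [pderiv_monomial, X, monomial_mul, one_mul, coeff_monomial]
    by_cases h0 : s k = 0
    · simp [h0]
    · rw [if_neg]
      intro h
      apply hs
      rw [← h, add_comm, tsub_add_cancel_of_le]
      exact Finsupp.single_le_iff.mpr (Nat.one_le_iff_ne_zero.mpr h0)
  rw [Finset.sum_eq_single d key]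
  · rw [pderiv_monomial, X, monomial_mul, one_mul, coeff_monomial]
    by_cases h0 : d k = 0
    · simp [h0]
    · rw [if_pos, mul_comm (Φ.coeff d) _]
      rw [add_comm, tsub_add_cancel_of_le]
      exact Finsupp.single_le_iff.mpr (Nat.one_le_iff_ne_zero.mpr h0)
  · intro h
    rw [MvPolynomial.notMem_support_iff.mp h, map_zero, map_zero, mul_zero,
      MvPolynomial.coeff_zero]

lemma cast_descFactorial (a n : ℕ) :
    ((a.descFactorial n : ℕ) : ZMod p) = ∏ i ∈ Finset.range n, ((a : ZMod p) - (i : ZMod p)) := by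
  rcases le_or_gt n a with h | h
  · rw [Nat.descFactorial_eq_prod_range, Nat.cast_prod]
    apply Finset.prod_congr rfl
    intro i hi
    rw [Nat.cast_sub (le_of_lt (lt_of_lt_of_le (Finset.mem_range.mp hi) h))]
  · rw [Nat.descFactorial_eq_zero_iff_lt.mpr h, Nat.cast_zero]
    rw [eq_comm]
    apply Finset.prod_eq_zero (Finset.mem_range.mpr h)
    rw [sub_self]

lemma cast_descFactorial_shift (u n m : ℕ) :
    (((u + p * m).descFactorial n : ℕ) : ZMod p) = ((u.descFactorial n : ℕ) : ZMod p) := by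
  rw [cast_descFactorial, cast_descFactorial]
  apply Finset.prod_congr rfl
  intro i _
  push_cast
  simp [ZMod.natCast_self]

lemma cast_descFactorial_ne_zero (hp : p.Prime) (u n : ℕ) (hu : u < p) (hn : n ≤ u) :
    ((u.descFactorial n : ℕ) : ZMod p) ≠ 0 := by
  rw [Ne, ZMod.natCast_eq_zero_iff]
  intro hdvd
  have h2 : u.descFactorial n ∣ u.factorial :=
    Dvd.intro_left _ (Nat.factorial_mul_descFactorial hn)
  have h1 : p ∣ u.factorial := dvd_trans hdvd h2
  exact absurd ((Nat.Prime.dvd_factorial hp).mp h1) (not_le.mpr hu)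

lemma cast_descFactorial_zero (w n : ℕ) (hw : 0 < p) (h : w % p < n) :
    ((w.descFactorial n : ℕ) : ZMod p) = 0 := by
  rw [cast_descFactorial]
  apply Finset.prod_eq_zero (Finset.mem_range.mpr h)
  have hcast : ((w % p : ℕ) : ZMod p) = (w : ZMod p) := ZMod.natCast_mod w p
  rw [← hcast, sub_self]

end Part3

section Part4
variable {r N : ℕ} {a : Fin N → Fin r → ℤ}

/-- `ψ` on nonneg integer vectors -/
def psin (a : Fin N → Fin r → ℤ) (c : Fin N → ℕ) : Fin r → ℤ := ∑ i, c i • a i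

lemma psin_apply (c : Fin N → ℕ) (j : Fin r) :
    psin a c j = ∑ i, (c i : ℤ) * a i j := by
  rw [psin, Finset.sum_apply]
  exact Finset.sum_congr rfl fun i _ => by
    rw [Pi.smul_apply, nsmul_eq_mul]

lemma psin_cast_eq (c : Fin N → ℕ) : (∑ i, (c i : ℤ) • a i) = psin a c := by
  rw [psin]
  exact Finset.sum_congr rfl fun i _ => natCast_zsmul (a i) (c i)

lemma psin_add (c d : Fin N → ℕ) : psin a (c + d) = psin a c + psin a d := by
  funext j
  simp only [psin_apply, Pi.add_apply]
  rw [← Finset.sum_add_distrib]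
  exact Finset.sum_congr rfl fun i _ => by push_cast; ring

lemma psin_smul (n : ℕ) (c : Fin N → ℕ) : psin a (fun i => n * c i) = n • psin a c := by
  funext j
  simp only [psin_apply, Pi.smul_apply, nsmul_eq_mul, Finset.mul_sum]
  exact Finset.sum_congr rfl fun i _ => by push_cast; ring

lemma psin_mem_cone (c : Fin N → ℕ) : (fun j => (psin a c j : ℝ)) ∈ coneOf a := by
  refine ⟨fun i => (c i : ℝ), fun i => by positivity, ?_⟩
  funext j
  rw [Finset.sum_apply, psin_apply]
  push_cast
  exact Finset.sum_congr rfl fun i _ => by rw [Pi.smul_apply, smul_eq_mul]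

lemma cone_smul {x : Fin r → ℝ} (hx : x ∈ coneOf a) {t : ℝ} (ht : 0 ≤ t) :
    (fun j => t * x j) ∈ coneOf a := by
  obtain ⟨c, hc, hx⟩ := hx
  refine ⟨fun i => t * c i, fun i => mul_nonneg ht (hc i), ?_⟩
  funext j
  rw [hx]
  rw [Finset.sum_apply, Finset.sum_apply, Finset.mul_sum]
  exact Finset.sum_congr rfl fun i _ => by
    rw [Pi.smul_apply, Pi.smul_apply, smul_eq_mul, smul_eq_mul]; ring

lemma cone_single (k : Fin N) : (fun j => (a k j : ℝ)) ∈ coneOf a := by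
  have := psin_mem_cone (a := a) (fun i => if i = k then 1 else 0)
  convert this using 1
  funext j
  rw [psin_apply]
  push_cast
  simp

lemma a_ne_zero {h : (Fin r → ℝ) →ₗ[ℝ] ℝ} (hh : ∀ i, h (fun j => (a i j : ℝ)) = 1)
    (k : Fin N) : (fun j => (a k j : ℝ)) ≠ 0 := by
  intro hcontra
  have := hh k
  rw [hcontra, map_zero] at this
  exact zero_ne_one this

end Part4

section ConeAdd
variable {r N : ℕ} {a : Fin N → Fin r → ℤ}

lemma cone_add {x y : Fin r → ℝ} (hx : x ∈ coneOf a) (hy : y ∈ coneOf a) :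
    x + y ∈ coneOf a := by
  obtain ⟨c, hc, rfl⟩ := hx
  obtain ⟨d, hd, rfl⟩ := hy
  refine ⟨fun i => c i + d i, fun i => add_nonneg (hc i) (hd i), ?_⟩
  rw [← Finset.sum_add_distrib]
  exact Finset.sum_congr rfl fun i _ => (add_smul _ _ _).symm

end ConeAdd

section Part5
variable {r N : ℕ} {a : Fin N → Fin r → ℤ}

lemma psin_delta (k : Fin N) (n : ℕ) :
    psin a (fun i => if i = k then n else 0) = fun j => (n : ℤ) * a k j := by
  funext j
  rw [psin_apply, Finset.sum_eq_single k]
  · simp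
  · intro b _ hb; simp [hb]
  · intro hk'; exact absurd (Finset.mem_univ k) hk'

lemma mem_K_div (p : ℕ) (hp : 0 < p) (α X : Fin r → ℤ)
    (hXα : ∀ j, (p : ℤ) ∣ (X j - α j)) (c : Fin N → ℕ) (hc : X = psin a c) :
    (fun j => (X j : ℝ) / p) ∈ Kset a (fun j => (α j : ℝ) / p) := by
  have hp' : (p : ℝ) ≠ 0 := Nat.cast_ne_zero.mpr hp.ne'
  constructor
  · refine ⟨fun j => (X j - α j) / p, ?_⟩
    funext j
    show (X j : ℝ) / p = (α j : ℝ) / p + (((X j - α j) / p : ℤ) : ℝ)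
    obtain ⟨m, hm⟩ := hXα j
    rw [hm, Int.mul_ediv_cancel_left m (by exact_mod_cast hp.ne')]
    have hX : (X j : ℝ) = α j + p * m := by
      have h0 : X j = α j + p * m := by omega
      exact_mod_cast congrArg (fun z : ℤ => (z : ℝ)) h0
    rw [hX]
    field_simp
  · have h1 : (fun j => (p : ℝ)⁻¹ * (psin a c j : ℝ)) ∈ coneOf a :=
      cone_smul (psin_mem_cone c) (inv_nonneg.mpr (Nat.cast_nonneg p))
    convert h1 using 1
    funext j
    rw [hc, div_eq_inv_mul]

lemma rep_box (p : ℕ) (hp : 0 < p) (α : Fin r → ℤ)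
    {h : (Fin r → ℝ) →ₗ[ℝ] ℝ} (hh : ∀ i, h (fun j => (a i j : ℝ)) = 1)
    (B : Fin r → ℤ) (hapex : IsApex a (fun j => (α j : ℝ) / p) (fun j => (B j : ℝ) / p))
    (c : Fin N → ℕ) (hc : psin a c = B) (k : Fin N) : c k < p := by
  have hp' : (p : ℝ) ≠ 0 := Nat.cast_ne_zero.mpr hp.ne'
  by_contra hk
  push_neg at hk
  obtain ⟨m, hm⟩ := hapex.1.1
  have hBα : ∀ j, B j = α j + p * m j := by
    intro j
    have h0 := congrFun hm j
    have h2 : (B j : ℝ) = α j + p * m j := by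
      field_simp at h0 ⊢
      linarith [h0]
    exact_mod_cast h2
  set c' : Fin N → ℕ := fun i => c i - (if i = k then p else 0) with hc'
  have hcc : c = c' + fun i => (if i = k then p else 0) := by
    funext i
    simp only [Pi.add_apply, hc']
    rcases eq_or_ne i k with rfl | hik
    · simp [Nat.sub_add_cancel hk]
    · simp [hik]
  have hsplit : psin a c' = fun j => B j - p * a k j := by
    have h3 := psin_add (a := a) c' (fun i => (if i = k then p else 0))
    rw [← hcc, hc, psin_delta] at h3
    funext j
    have h4 := congrFun h3 j
    simp only [Pi.add_apply] at h4
    push_cast at h4 ⊢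
    omega
  set q : Fin r → ℝ := fun j => ((B j : ℝ) - p * a k j) / p with hq
  have hqK : q ∈ Kset a (fun j => (α j : ℝ) / p) := by
    have hdvd : ∀ j, (p : ℤ) ∣ ((B j - p * a k j) - α j) := by
      intro j; rw [hBα j]; exact ⟨m j - a k j, by ring⟩
    have h5 := mem_K_div p hp α (fun j => B j - p * a k j) hdvd c' hsplit.symm
    convert h5 using 1
    funext j
    push_cast
    rw [hq]
  have hqne : q ≠ fun j => (B j : ℝ) / p := by
    intro hqe
    apply a_ne_zero hh k
    funext j
    have h6 := congrFun hqe j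
    rw [hq] at h6
    field_simp at h6
    show ((a k j : ℤ) : ℝ) = (0 : Fin r → ℝ) j
    simp only [Pi.zero_apply]
    have h7 : (p : ℝ) * a k j = 0 := by linarith
    exact (mul_eq_zero.mp h7).resolve_left hp'
  have hdiff : (fun j => (B j : ℝ) / p) - q = fun j => (a k j : ℝ) := by
    funext j
    simp only [Pi.sub_apply, hq]
    field_simp
    ring
  exact hapex.2 q hqK hqne (hdiff ▸ cone_single k)

lemma exists_bigrep (p : ℕ) (hp : 0 < p)
    (hiii : ∀ x : Fin r → ℤ, ((fun j => (x j : ℝ)) ∈ coneOf a ↔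
        ∃ c : Fin N → ℕ, x = ∑ i, c i • a i))
    (α : Fin r → ℤ) (u : Fin N → ℕ)
    (hcong : ∀ j, (p : ℤ) ∣ (psin a u j - α j))
    (hnotapex : ¬ IsApex a (fun j => (α j : ℝ) / p) (fun j => (psin a u j : ℝ) / p)) :
    ∃ w : Fin N → ℕ, psin a w = psin a u ∧ ∃ k, p ≤ w k := by
  have hp' : (p : ℝ) ≠ 0 := Nat.cast_ne_zero.mpr hp.ne'
  set X := psin a u with hX
  have hK : (fun j => (X j : ℝ) / p) ∈ Kset a (fun j => (α j : ℝ) / p) :=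
    mem_K_div p hp α X hcong u rfl
  rw [IsApex, not_and] at hnotapex
  have hna := hnotapex hK
  push_neg at hna
  obtain ⟨q, hqK, hqne, hqcone⟩ := hna
  obtain ⟨m, hm⟩ := hqK.1
  -- D j : the integer (X j - α j)/p
  have hD : ∀ j, ∃ D : ℤ, X j - α j = p * D := hcong
  choose D hDel using hD
  set v : Fin r → ℤ := fun j => D j - m j with hv
  have hq_apply : ∀ j, q j = (α j : ℝ) / p + m j := fun j => congrFun hm j
  have hXreal : ∀ j, (X j : ℝ) = α j + p * D j := by
    intro j
    have h0 : X j = α j + p * D j := by have := hDel j; omega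
    exact_mod_cast congrArg (fun z : ℤ => (z : ℝ)) h0
  have hv_cast : ∀ j, (v j : ℝ) = (X j : ℝ) / p - q j := by
    intro j
    rw [hq_apply j, hv]
    push_cast
    rw [hXreal j]
    field_simp
    ring
  have hv_cone : (fun j => (v j : ℝ)) ∈ coneOf a := by
    convert hqcone using 1
    funext j
    rw [hv_cast j]
    rfl
  obtain ⟨t, ht⟩ := (hiii v).mp hv_cone
  have ht' : psin a t = v := ht.symm
  have hv_ne : v ≠ 0 := by
    intro hv0
    apply hqne
    funext j
    have h0 := hv_cast j
    rw [hv0] at h0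
    simp only [Pi.zero_apply, Int.cast_zero] at h0
    linarith
  have ht_ne : ∃ k, 1 ≤ t k := by
    by_contra hcon
    push_neg at hcon
    apply hv_ne
    rw [← ht']
    funext j
    rw [psin_apply]
    apply Finset.sum_eq_zero
    intro i _
    have h0 : t i = 0 := Nat.lt_one_iff.mp (hcon i)
    rw [h0]
    simp
  obtain ⟨k, hk⟩ := ht_ne
  -- t = t' + δ_k
  set t' : Fin N → ℕ := fun i => t i - (if i = k then 1 else 0) with htp
  have htt : t = t' + fun i => (if i = k then 1 else 0) := by
    funext i
    simp only [Pi.add_apply, htp]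
    rcases eq_or_ne i k with rfl | hik
    · simp [Nat.sub_add_cancel hk]
    · simp [hik]
  have hsplit : ∀ j, psin a t' j = v j - a k j := by
    have h3 := psin_add (a := a) t' (fun i => (if i = k then 1 else 0))
    rw [← htt, psin_delta] at h3
    rw [ht'] at h3
    intro j
    have h4 := congrFun h3 j
    simp only [Pi.add_apply] at h4
    omega
  -- X - p a_k is in the cone
  have hbig_cone : (fun j => ((X j - p * a k j : ℤ) : ℝ)) ∈ coneOf a := by
    have hg : (fun j => (psin a t' j : ℝ)) + q ∈ coneOf a :=
      cone_add (psin_mem_cone t') hqK.2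
    have h5 := cone_smul hg (t := (p : ℝ)) (Nat.cast_nonneg p)
    convert h5 using 1
    funext j
    simp only [Pi.add_apply]
    rw [hsplit j]
    push_cast
    rw [hv_cast j, hXreal j]
    field_simp
    ring
  obtain ⟨t'', ht''⟩ := (hiii (fun j => X j - p * a k j)).mp hbig_cone
  have ht''2 : psin a t'' = fun j => X j - p * a k j := ht''.symm
  refine ⟨t'' + fun i => (if i = k then p else 0), ?_, k, ?_⟩
  · rw [psin_add, psin_delta, ht''2]
    funext j
    simp only [Pi.add_apply]
    push_cast
    ring
  · have h6 : (t'' + fun i => (if i = k then p else 0)) k = t'' k + p := by simp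
    omega

end Part5

section Part6
variable {r N p : ℕ} {a : Fin N → Fin r → ℤ} {P : MvPolynomial (Fin N) (ZMod p)}

lemma toric_coeff
    (hP1 : ∀ l : Fin N → ℤ, (∑ i, l i • a i) = 0 →
      derivMonomial p N (fun i => (l i).toNat) P =
      derivMonomial p N (fun i => (-l i).toNat) P)
    (u w : Fin N → ℕ) (hwu : psin a w = psin a u) (e : Fin N →₀ ℕ) :
    (∏ k, ((e k + (w k - u k)).descFactorial (w k - u k) : ZMod p)) *
        P.coeff (e + Uof (fun k => w k - u k)) =
      (∏ k, ((e k + (u k - w k)).descFactorial (u k - w k) : ZMod p)) *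
        P.coeff (e + Uof (fun k => u k - w k)) := by
  set l : Fin N → ℤ := fun k => (w k : ℤ) - u k with hl
  have hl0 : (∑ i, l i • a i) = 0 := by
    have h1 : ∀ i, l i • a i = (w i : ℤ) • a i - (u i : ℤ) • a i := by
      intro i; rw [hl, sub_smul]
    rw [Finset.sum_congr rfl fun i _ => h1 i, Finset.sum_sub_distrib,
      psin_cast_eq, psin_cast_eq, hwu, sub_self]
  have htor := hP1 l hl0
  have h2 : (fun i => (l i).toNat) = fun k => w k - u k := by
    funext i; rw [hl]; exact Int.toNat_sub _ _
  have h3 : (fun i => (-l i).toNat) = fun k => u k - w k := by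
    funext i; rw [hl, neg_sub]; exact Int.toNat_sub _ _
  have := congrArg (fun Q => MvPolynomial.coeff e Q) htor
  simp only [h2, h3] at this
  rw [coeff_derivMonomial, coeff_derivMonomial] at this
  exact this

lemma coeff_eq_zero_of_bigrep (hp : p.Prime)
    (hP1 : ∀ l : Fin N → ℤ, (∑ i, l i • a i) = 0 →
      derivMonomial p N (fun i => (l i).toNat) P =
      derivMonomial p N (fun i => (-l i).toNat) P)
    (u : Fin N → ℕ) (hu : ∀ k, u k < p) (m : Fin N → ℕ)
    (w : Fin N → ℕ) (hw : psin a w = psin a u) (k0 : Fin N) (hk0 : p ≤ w k0) :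
    P.coeff (Uof (fun k => u k + p * m k)) = 0 := by
  haveI := Fact.mk hp
  set e : Fin N →₀ ℕ := Uof (fun k => min (u k) (w k) + p * m k) with he
  have T := toric_coeff hP1 u w hw e
  have hew : e + Uof (fun k => w k - u k) = Uof (fun k => w k + p * m k) := by
    ext k; simp only [Finsupp.add_apply, he, Uof_apply]; omega
  have heu : e + Uof (fun k => u k - w k) = Uof (fun k => u k + p * m k) := by
    ext k; simp only [Finsupp.add_apply, he, Uof_apply]; omega
  have hewk : ∀ k, e k + (w k - u k) = w k + p * m k := by
    intro k; simp only [he, Uof_apply]; omega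
  have heuk : ∀ k, e k + (u k - w k) = u k + p * m k := by
    intro k; simp only [he, Uof_apply]; omega
  rw [hew, heu] at T
  -- left side product is zero
  have hzero : ((e k0 + (w k0 - u k0)).descFactorial (w k0 - u k0) : ZMod p) = 0 := by
    rw [hewk k0]
    apply cast_descFactorial_zero _ _ hp.pos
    have h1 : (w k0 + p * m k0) % p = w k0 % p := Nat.add_mul_mod_self_left _ _ _
    have h2 := Nat.div_add_mod (w k0) p
    have h3 : 1 ≤ w k0 / p := (Nat.one_le_div_iff hp.pos).mpr hk0
    have h4 := hu k0
    have h5 : p ≤ p * (w k0 / p) := Nat.le_mul_of_pos_right p h3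
    rw [h1]
    omega
  rw [Finset.prod_eq_zero (Finset.mem_univ k0) hzero, zero_mul] at T
  -- right side product is nonzero
  have hne : (∏ k, ((e k + (u k - w k)).descFactorial (u k - w k) : ZMod p)) ≠ 0 := by
    rw [Finset.prod_ne_zero_iff]
    intro k _
    rw [heuk k, cast_descFactorial_shift]
    exact cast_descFactorial_ne_zero hp _ _ (hu k) (Nat.sub_le _ _)
  exact (mul_eq_zero.mp T.symm).resolve_left hne

lemma coeff_consistency (hp : p.Prime)
    (hP1 : ∀ l : Fin N → ℤ, (∑ i, l i • a i) = 0 →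
      derivMonomial p N (fun i => (l i).toNat) P =
      derivMonomial p N (fun i => (-l i).toNat) P)
    (u u' : Fin N → ℕ) (hu : ∀ k, u k < p) (hu' : ∀ k, u' k < p)
    (huu : psin a u = psin a u') (m : Fin N → ℕ) :
    P.coeff (Uof (fun k => u k + p * m k)) * (∏ k, ((u k).factorial : ZMod p)) =
      P.coeff (Uof (fun k => u' k + p * m k)) * (∏ k, ((u' k).factorial : ZMod p)) := by
  set e : Fin N →₀ ℕ := Uof (fun k => min (u k) (u' k) + p * m k) with he
  have T := toric_coeff hP1 u u' huu.symm e
  have hew : e + Uof (fun k => u' k - u k) = Uof (fun k => u' k + p * m k) := by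
    ext k; simp only [Finsupp.add_apply, he, Uof_apply]; omega
  have heu : e + Uof (fun k => u k - u' k) = Uof (fun k => u k + p * m k) := by
    ext k; simp only [Finsupp.add_apply, he, Uof_apply]; omega
  have hewk : ∀ k, e k + (u' k - u k) = u' k + p * m k := by
    intro k; simp only [he, Uof_apply]; omega
  have heuk : ∀ k, e k + (u k - u' k) = u k + p * m k := by
    intro k; simp only [he, Uof_apply]; omega
  rw [hew, heu] at T
  have hprod1 : (∏ k, ((e k + (u' k - u k)).descFactorial (u' k - u k) : ZMod p)) =
      ∏ k, (((u' k).descFactorial (u' k - u k) : ℕ) : ZMod p) :=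
    Finset.prod_congr rfl fun k _ => by rw [hewk k, cast_descFactorial_shift]
  have hprod2 : (∏ k, ((e k + (u k - u' k)).descFactorial (u k - u' k) : ZMod p)) =
      ∏ k, (((u k).descFactorial (u k - u' k) : ℕ) : ZMod p) :=
    Finset.prod_congr rfl fun k _ => by rw [heuk k, cast_descFactorial_shift]
  rw [hprod1, hprod2] at T
  -- multiply both sides of T by ∏ (min (u k) (u' k))!
  have key : ∀ (v v' : Fin N → ℕ), (∀ k, v' k - (v' k - v k) = min (v k) (v' k)) →
      (∏ k, (((v' k).descFactorial (v' k - v k) : ℕ) : ZMod p)) *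
        (∏ k, ((min (v k) (v' k)).factorial : ZMod p)) =
      ∏ k, (((v' k).factorial : ℕ) : ZMod p) := by
    intro v v' hmin
    rw [← Finset.prod_mul_distrib]
    apply Finset.prod_congr rfl
    intro k _
    rw [← Nat.cast_mul]
    congr 1
    rw [← hmin k, mul_comm]
    exact Nat.factorial_mul_descFactorial (Nat.sub_le _ _)
  have k1 := key u u' (fun k => by omega)
  have k2 := key u' u (fun k => by omega)
  calc P.coeff (Uof (fun k => u k + p * m k)) * (∏ k, ((u k).factorial : ZMod p))
      = P.coeff (Uof (fun k => u k + p * m k)) *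
          ((∏ k, (((u k).descFactorial (u k - u' k) : ℕ) : ZMod p)) *
           (∏ k, ((min (u' k) (u k)).factorial : ZMod p))) := by
        rw [k2]
    _ = ((∏ k, (((u k).descFactorial (u k - u' k) : ℕ) : ZMod p)) *
          P.coeff (Uof (fun k => u k + p * m k))) *
           (∏ k, ((min (u' k) (u k)).factorial : ZMod p)) := by ring
    _ = ((∏ k, (((u' k).descFactorial (u' k - u k) : ℕ) : ZMod p)) *
          P.coeff (Uof (fun k => u' k + p * m k))) *
           (∏ k, ((min (u' k) (u k)).factorial : ZMod p)) := by rw [T]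
    _ = P.coeff (Uof (fun k => u' k + p * m k)) *
          ((∏ k, (((u' k).descFactorial (u' k - u k) : ℕ) : ZMod p)) *
           (∏ k, ((min (u k) (u' k)).factorial : ZMod p))) := by
        have : (∏ k, ((min (u' k) (u k)).factorial : ZMod p)) =
            ∏ k, ((min (u k) (u' k)).factorial : ZMod p) :=
          Finset.prod_congr rfl fun k _ => by rw [min_comm]
        rw [this]; ring
    _ = P.coeff (Uof (fun k => u' k + p * m k)) * (∏ k, ((u' k).factorial : ZMod p)) := by
        rw [k1]

end Part6

lemma euler_support {r N p : ℕ} (hp : p.Prime) {a : Fin N → Fin r → ℤ} {α : Fin r → ℤ}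
    {P : MvPolynomial (Fin N) (ZMod p)}
    (hP2 : ∀ j : Fin r,
      (∑ k, (a k j : ZMod p) • (MvPolynomial.X k * MvPolynomial.pderiv k P)) =
        (α j : ZMod p) • P)
    (d : Fin N →₀ ℕ) (hd : P.coeff d ≠ 0) (j : Fin r) :
    ((psin a (fun k => d k) j : ℤ) : ZMod p) = ((α j : ℤ) : ZMod p) := by
  haveI := Fact.mk hp
  have h0 := congrArg (fun Q => MvPolynomial.coeff d Q) (hP2 j)
  simp only [MvPolynomial.coeff_sum, MvPolynomial.coeff_smul, smul_eq_mul] at h0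
  have h1 : ∀ k, (a k j : ZMod p) * (X k * MvPolynomial.pderiv k P).coeff d =
      ((d k : ZMod p) * (a k j : ZMod p)) * P.coeff d := by
    intro k
    rw [coeff_X_mul_pderiv]
    ring
  rw [Finset.sum_congr rfl fun k _ => h1 k, ← Finset.sum_mul] at h0
  have h2 : (∑ k, (d k : ZMod p) * (a k j : ZMod p)) = ((α j : ℤ) : ZMod p) :=
    mul_right_cancel₀ hd h0
  rw [← h2, psin_apply]
  push_cast
  rfl

lemma prod_monomial_one {N p : ℕ} {ι : Type*} (s : Finset ι) (g : ι → (Fin N →₀ ℕ)) :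
    (∏ k ∈ s, (monomial (g k) (1 : ZMod p))) = monomial (∑ k ∈ s, g k) (1 : ZMod p) := by
  classical
  induction s using Finset.induction_on with
  | empty => simp [monomial_zero']
  | insert _ _ hnotmem ih =>
      rw [Finset.prod_insert hnotmem, Finset.sum_insert hnotmem, ih, monomial_mul, one_mul]

lemma prod_X_pow_p {N p : ℕ} (n : Fin N → ℕ) :
    (∏ k, ((MvPolynomial.X k : MvPolynomial (Fin N) (ZMod p)) ^ p) ^ (n k)) =
      monomial (Uof fun k => p * n k) (1 : ZMod p) := by
  have h1 : ∀ k : Fin N, ((MvPolynomial.X k : MvPolynomial (Fin N) (ZMod p)) ^ p) ^ (n k) =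
      monomial (Finsupp.single k (p * n k)) (1 : ZMod p) := by
    intro k
    rw [← pow_mul, X_pow_eq_monomial]
  have hS : (∑ k, Finsupp.single k (p * n k)) = Uof (fun k => p * n k) := by
    ext k
    rw [Finsupp.finset_sum_apply]
    simp [Finsupp.single_apply]
  rw [Finset.prod_congr rfl fun k _ => h1 k, prod_monomial_one, hS]

/-- every mod-`p` polynomial solution of the A-hypergeometric system with
parameters `(A, α)`, `α ∈ ℤ^r`, is an `F_p[v_1^p,…,v_N^p]`-linear combination of the
polynomials `Ψ_i` attached to the apexpoints `β_i/p` of `K_{α/p}`. -/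
theorem modp_solutions_spanned_by_apex_solutions (r N : ℕ) (p : ℕ) (hp : p.Prime)
    (a : Fin N → Fin r → ℤ)
    (hspan : Submodule.span ℤ (Set.range a) = ⊤)
    (hhom : ∃ h : (Fin r → ℝ) →ₗ[ℝ] ℝ, ∀ i, h (fun j => (a i j : ℝ)) = 1)
    (hiii : ∀ x : Fin r → ℤ, ((fun j => (x j : ℝ)) ∈ coneOf a ↔
        ∃ c : Fin N → ℕ, x = ∑ i, c i • a i))
    (α : Fin r → ℤ) (σ : ℕ) (β : Fin σ → Fin r → ℤ)
    (hβinj : Function.Injective β)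
    (hβapex : ∀ i, IsApex a (fun j => (α j : ℝ) / p) (fun j => (β i j : ℝ) / p))
    (hβall : ∀ x : Fin r → ℝ, IsApex a (fun j => (α j : ℝ) / p) x →
        ∃ i, x = fun j => (β i j : ℝ) / p)
    (Ψ : Fin σ → MvPolynomial (Fin N) (ZMod p))
    (hΨ : ∀ i, ∀ d : Fin N →₀ ℕ, (Ψ i).coeff d =
        if (∑ k, (d k : ℤ) • a k) = β i
        then (∏ k, ((d k).factorial : ZMod p))⁻¹ else 0)
    (P : MvPolynomial (Fin N) (ZMod p)) (hP : IsModpSolution p a α P) :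
    ∃ c : Fin σ → MvPolynomial (Fin N) (ZMod p),
      (∀ i, c i ∈ Algebra.adjoin (ZMod p)
        (Set.range fun k => (MvPolynomial.X k : MvPolynomial (Fin N) (ZMod p)) ^ p)) ∧
      P = ∑ i, c i * Ψ i := by
  classical
  haveI := Fact.mk hp
  have hp0 : 0 < p := hp.pos
  have hpr : (p : ℝ) ≠ 0 := Nat.cast_ne_zero.mpr hp0.ne'
  obtain ⟨h, hh⟩ := hhom
  -- box representatives of the β i
  have hrep : ∀ i, ∃ c : Fin N → ℕ, psin a c = β i := by
    intro i
    have h1 : (fun j => ((β i j : ℤ) : ℝ)) ∈ coneOf a := by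
      have h2 := cone_smul (hβapex i).1.2 (t := (p : ℝ)) (Nat.cast_nonneg p)
      convert h2 using 1
      funext j
      field_simp
    obtain ⟨c, hc⟩ := (hiii (β i)).mp h1
    exact ⟨c, hc.symm⟩
  choose rep hrepeq using hrep
  have hrepbox : ∀ i k, rep i k < p :=
    fun i k => rep_box p hp0 α hh (β i) (hβapex i) (rep i) (hrepeq i) k
  -- the coefficient polynomials
  set CC : Fin σ → MvPolynomial (Fin N) (ZMod p) := fun i =>
    ∑ d ∈ P.support.filter (fun d => ∀ k, d k % p = rep i k),
      (P.coeff d * ∏ k, ((rep i k).factorial : ZMod p)) •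
        ∏ k, ((MvPolynomial.X k : MvPolynomial (Fin N) (ZMod p)) ^ p) ^ (d k / p) with hCC
  refine ⟨CC, ?_, ?_⟩
  · intro i
    apply Subalgebra.sum_mem
    intro d _
    apply Subalgebra.smul_mem
    apply Subalgebra.prod_mem
    intro k _
    exact Subalgebra.pow_mem _ (Algebra.subset_adjoin (Set.mem_range_self k)) _
  · apply MvPolynomial.ext
    intro e
    set f : Fin N → ℕ := fun k => e k % p with hf
    set M : Fin N → ℕ := fun k => e k / p with hM
    have hfb : ∀ k, f k < p := fun k => Nat.mod_lt _ hp0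
    have hefM : ∀ k, e k = f k + p * M k := by
      intro k
      show e k = e k % p + p * (e k / p)
      have := Nat.div_add_mod (e k) p
      omega
    have heUof : Uof (fun k => f k + p * M k) = e := by
      ext k
      show f k + p * M k = e k
      exact (hefM k).symm
    -- key per-index formula
    have hterm : ∀ i, (CC i * Ψ i).coeff e =
        P.coeff (Uof fun k => rep i k + p * M k) *
          (∏ k, ((rep i k).factorial : ZMod p)) *
          (if psin a f = β i then (∏ k, ((f k).factorial : ZMod p))⁻¹ else 0) := by
      intro i
      rw [hCC]
      simp only []
      rw [Finset.sum_mul, MvPolynomial.coeff_sum]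
      have hre : ∀ d ∈ P.support.filter (fun d => ∀ k, d k % p = rep i k),
          ((P.coeff d * ∏ k, ((rep i k).factorial : ZMod p)) •
              (∏ k, ((MvPolynomial.X k : MvPolynomial (Fin N) (ZMod p)) ^ p) ^ (d k / p)) *
              Ψ i).coeff e =
          (P.coeff d * ∏ k, ((rep i k).factorial : ZMod p)) *
            (if (Uof fun k => p * (d k / p)) ≤ e
              then (Ψ i).coeff (e - Uof fun k => p * (d k / p)) else 0) := by
        intro d _
        rw [smul_mul_assoc, MvPolynomial.coeff_smul, prod_X_pow_p, coeff_monomial_mul',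
          smul_eq_mul]
        congr 1
        split <;> [rw [one_mul]; rfl]
      rw [Finset.sum_congr rfl hre]
      -- reduce the sum to the single term at d₀
      set d₀ : Fin N →₀ ℕ := Uof (fun k => rep i k + p * M k) with hd₀
      have hd₀div : ∀ k, d₀ k / p = M k := by
        intro k
        show (rep i k + p * M k) / p = M k
        rw [Nat.add_mul_div_left _ _ hp0, Nat.div_eq_of_lt (hrepbox i k), zero_add]
      have hd₀mod : ∀ k, d₀ k % p = rep i k := by
        intro k
        show (rep i k + p * M k) % p = rep i k
        rw [Nat.add_mul_mod_self_left, Nat.mod_eq_of_lt (hrepbox i k)]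
      rw [Finset.sum_eq_single d₀]
      · -- the value at d₀
        have hs₀ : (Uof fun k => p * (d₀ k / p)) = Uof (fun k => p * M k) := by
          ext k
          show p * (d₀ k / p) = p * M k
          rw [hd₀div k]
        rw [hs₀]
        have hle : Uof (fun k => p * M k) ≤ e := by
          rw [Finsupp.le_def]
          intro k
          show p * (e k / p) ≤ e k
          calc p * (e k / p) = e k / p * p := mul_comm _ _
            _ ≤ e k := Nat.div_mul_le_self _ _
        rw [if_pos hle]
        have hsub : e - Uof (fun k => p * M k) = Uof f := by
          ext k
          rw [Finsupp.tsub_apply]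
          show e k - (p * M k) = f k
          have := hefM k
          omega
        rw [hsub]
        have hΨval : (Ψ i).coeff (Uof f) =
            (if psin a f = β i then (∏ k, ((f k).factorial : ZMod p))⁻¹ else 0) := by
          rw [hΨ i (Uof f)]
          have hps : (∑ k, (((Uof f) k : ℤ)) • a k) = psin a f := psin_cast_eq f
          rw [hps]
          congr 1
        rw [hΨval]
      · -- other terms vanish
        intro d hdmem hdne
        rw [Finset.mem_filter] at hdmem
        by_cases hle : (Uof fun k => p * (d k / p)) ≤ e
        · rw [if_pos hle]
          by_cases hz : (Ψ i).coeff (e - Uof fun k => p * (d k / p)) = 0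
          · rw [hz, mul_zero]
          · exfalso
            have hcond : psin a (fun k => (e - Uof fun k' => p * (d k' / p)) k) = β i := by
              by_contra hc
              apply hz
              rw [hΨ i, if_neg]
              exact fun hcon => hc
                ((psin_cast_eq (fun k => (e - Uof fun k' => p * (d k' / p)) k)).symm.trans hcon)
            have hgbox : ∀ k, (e - Uof fun k' => p * (d k' / p)) k < p :=
              fun k => rep_box p hp0 α hh (β i) (hβapex i) _ hcond k
            apply hdne
            have hgk : ∀ k, (e - Uof fun k' => p * (d k' / p)) k = e k - p * (d k / p) := by
              intro k
              rw [Finsupp.tsub_apply, Uof_apply]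
            have hlek : ∀ k, p * (d k / p) ≤ e k := by
              intro k
              have := (Finsupp.le_def.mp hle) k
              rwa [Uof_apply] at this
            have hdiv : ∀ k, d k / p = M k := by
              intro k
              have h1 : e k = (e k - p * (d k / p)) + p * (d k / p) := by
                have := hlek k; omega
              have h2 : e k - p * (d k / p) < p := by
                have := hgbox k; rwa [hgk k] at this
              show d k / p = e k / p
              rw [h1, Nat.add_mul_div_left _ _ hp0, Nat.div_eq_of_lt h2, zero_add]
            ext k
            show d k = (rep i k + p * M k)
            have h3 := Nat.mod_add_div (d k) p
            rw [← hdmem.2 k, ← hdiv k]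
            omega
        · rw [if_neg hle, mul_zero]
      · -- d₀ not in the filtered support
        intro hd₀mem
        have : P.coeff d₀ = 0 := by
          rw [← MvPolynomial.notMem_support_iff]
          intro hsup
          exact hd₀mem (Finset.mem_filter.mpr ⟨hsup, hd₀mod⟩)
        rw [this, zero_mul, zero_mul]
    -- now the global computation
    rw [MvPolynomial.coeff_sum, Finset.sum_congr rfl fun i _ => hterm i]
    by_cases hcase : ∃ i, psin a f = β i
    · obtain ⟨i₀, hi₀⟩ := hcase
      rw [Finset.sum_eq_single i₀]
      · rw [if_pos hi₀]
        have hcons := coeff_consistency hp hP.1 (rep i₀) f (hrepbox i₀) hfb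
          (by rw [hrepeq i₀, ← hi₀]) M
        rw [heUof] at hcons
        rw [hcons, mul_assoc, mul_inv_cancel₀, mul_one]
        rw [Finset.prod_ne_zero_iff]
        intro k _
        rw [Ne, ZMod.natCast_eq_zero_iff]
        intro hdvd
        exact absurd ((Nat.Prime.dvd_factorial hp).mp hdvd) (not_le.mpr (hfb k))
      · intro i _ hne
        rw [if_neg, mul_zero]
        intro hcon
        exact hne (hβinj (hi₀ ▸ hcon).symm ▸ rfl)
      · intro habs
        exact absurd (Finset.mem_univ i₀) habs
    · push_neg at hcase
      rw [Finset.sum_eq_zero fun i _ => by rw [if_neg (hcase i), mul_zero]]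
      by_contra hne0
      -- Euler implies congruence
      have hcong : ∀ j, (p : ℤ) ∣ (psin a f j - α j) := by
        intro j
        have h1 := euler_support hp hP.2 e hne0 j
        have h2 : ((psin a (fun k => e k) j - α j : ℤ) : ZMod p) = 0 := by
          push_cast
          rw [h1]
          push_cast
          ring
        have h3 : (p : ℤ) ∣ psin a (fun k => e k) j - α j :=
          (ZMod.intCast_zmod_eq_zero_iff_dvd _ _).mp h2
        have h4 : (p : ℤ) ∣ psin a (fun k => e k) j - psin a f j := by
          rw [psin_apply, psin_apply, ← Finset.sum_sub_distrib]
          apply Finset.dvd_sum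
          intro k _
          refine ⟨(M k : ℤ) * a k j, ?_⟩
          have h5 : (e k : ℤ) = f k + p * M k := by exact_mod_cast hefM k
          rw [← sub_mul]
          rw [h5]
          ring
        have h6 := dvd_sub h3 h4
        rwa [sub_sub_sub_cancel_left] at h6
      by_cases happx : IsApex a (fun j => (α j : ℝ) / p) (fun j => ((psin a f) j : ℝ) / p)
      · obtain ⟨i, hi⟩ := hβall _ happx
        apply hcase i
        funext j
        have h7 := congrFun hi j
        field_simp at h7
        exact_mod_cast h7
      · obtain ⟨w, hwψ, k0, hk0⟩ := exists_bigrep p hp0 hiii α f hcong happx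
        have hkill := coeff_eq_zero_of_bigrep hp hP.1 f hfb M w hwψ k0 hk0
        rw [heUof] at hkill
        exact hne0 hkill
end

section
/- Let A = {a_1, a_2, a_3, a_4} ⊂ ℤ^2 with a_1 = (−1,2), a_2 = (0,1), a_3 = (1,0), a_4 = (2,−1), so that C(A) = {(x,y) ∈ ℝ^2 : 2x + y ≥ 0, x + 2y ≥ 0}. Let a, b ∈ ℝ satisfy either (a − 1/2 ∈ ℤ and (b − 1/3 ∈ ℤ or b − 2/3 ∈ ℤ)) or ((a − 1/3 ∈ ℤ or a − 2/3 ∈ ℤ) and b − 1/2 ∈ ℤ), and set α = (−a, −b). Then K_α has exactly three apexpoints. -/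
/-- The Horn G3 set `A = {(-1,2), (0,1), (1,0), (2,-1)} ⊂ ℤ²`. -/
def hornG3 : Fin 4 → Fin 2 → ℤ := ![![-1, 2], ![0, 1], ![1, 0], ![2, -1]]

lemma mem_cone_iff (x : Fin 2 → ℝ) :
    x ∈ coneOf hornG3 ↔ 0 ≤ 2 * x 0 + x 1 ∧ 0 ≤ x 0 + 2 * x 1 := by
  constructor
  · rintro ⟨c, hc, rfl⟩
    have h0 := hc 0; have h1 := hc 1; have h2 := hc 2; have h3 := hc 3
    simp only [Fin.sum_univ_four, Pi.add_apply, Pi.smul_apply, smul_eq_mul, hornG3]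
    norm_num
    simp [Matrix.cons_val_two, Matrix.cons_val_three] at *
    constructor <;> linarith
  · rintro ⟨h1, h2⟩
    refine ⟨![(x 0 + 2*x 1)/3, 0, 0, (2*x 0 + x 1)/3], ?_, ?_⟩
    · intro i; fin_cases i <;> simp <;> linarith
    · funext j
      fin_cases j <;>
        · simp [Fin.sum_univ_four, hornG3]
          ring

lemma isApex_iff (α : Fin 2 → ℝ) (p : Fin 2 → ℝ) :
    IsApex hornG3 α p ↔
      (∃ m : Fin 2 → ℤ, p = fun j => α j + (m j : ℝ)) ∧
      0 ≤ 2 * p 0 + p 1 ∧ 0 ≤ p 0 + 2 * p 1 ∧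
      2 * p 0 + p 1 < 3 ∧ p 0 + 2 * p 1 < 3 ∧
      ¬(1 ≤ 2 * p 0 + p 1 ∧ 2 ≤ p 0 + 2 * p 1) ∧
      ¬(2 ≤ 2 * p 0 + p 1 ∧ 1 ≤ p 0 + 2 * p 1) := by
  constructor
  · rintro ⟨⟨⟨m, hm⟩, hcone⟩, hap⟩
    rw [mem_cone_iff] at hcone
    obtain ⟨hu, hv⟩ := hcone
    have key : ∀ s t : ℤ, ¬(s = 0 ∧ t = 0) →
        0 ≤ 2*(s:ℝ) + t → 0 ≤ (s:ℝ) + 2*t →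
        ¬(0 ≤ 2*(p 0 - s) + (p 1 - t) ∧ 0 ≤ (p 0 - s) + 2*(p 1 - t)) := by
      rintro s t hst h1 h2 ⟨h3, h4⟩
      set q : Fin 2 → ℝ := ![p 0 - s, p 1 - t] with hq
      have hp0 : p 0 = α 0 + m 0 := by rw [hm]
      have hp1 : p 1 = α 1 + m 1 := by rw [hm]
      have hqK : q ∈ Kset hornG3 α := by
        refine ⟨⟨![m 0 - s, m 1 - t], ?_⟩, ?_⟩
        · funext j; fin_cases j <;> · simp [hq, hp0, hp1]; push_cast; ring
        · rw [mem_cone_iff]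
          constructor <;> · simp [hq]; linarith
      have hqne : q ≠ p := by
        intro hqp
        rcases not_and_or.1 hst with hs | ht
        · have := congrFun hqp 0
          simp [hq] at this
          exact hs (by exact_mod_cast this)
        · have := congrFun hqp 1
          simp [hq] at this
          exact ht (by exact_mod_cast this)
      refine hap q hqK hqne ?_
      rw [mem_cone_iff]
      constructor <;> · simp [hq, Pi.sub_apply]; linarith
    refine ⟨⟨m, hm⟩, hu, hv, ?_, ?_, ?_, ?_⟩
    · by_contra hcon
      push_neg at hcon
      refine key 2 (-1) (by norm_num) (by norm_num) (by norm_num) ⟨?_, ?_⟩ <;>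
        · push_cast; linarith
    · by_contra hcon
      push_neg at hcon
      refine key (-1) 2 (by norm_num) (by norm_num) (by norm_num) ⟨?_, ?_⟩ <;>
        · push_cast; linarith
    · rintro ⟨hA, hB⟩
      refine key 0 1 (by norm_num) (by norm_num) (by norm_num) ⟨?_, ?_⟩ <;>
        · push_cast; linarith
    · rintro ⟨hA, hB⟩
      refine key 1 0 (by norm_num) (by norm_num) (by norm_num) ⟨?_, ?_⟩ <;>
        · push_cast; linarith
  · rintro ⟨⟨m, hm⟩, h1, h2, h3, h4, h5, h6⟩
    refine ⟨⟨⟨m, hm⟩, (mem_cone_iff p).2 ⟨h1, h2⟩⟩, ?_⟩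
    rintro q ⟨⟨m', hm'⟩, hqc⟩ hne hcon
    rw [mem_cone_iff] at hqc hcon
    have hp0 : p 0 = α 0 + m 0 := by rw [hm]
    have hp1 : p 1 = α 1 + m 1 := by rw [hm]
    have hq0 : q 0 = α 0 + m' 0 := by rw [hm']
    have hq1 : q 1 = α 1 + m' 1 := by rw [hm']
    set s : ℤ := m 0 - m' 0 with hs
    set t : ℤ := m 1 - m' 1 with ht
    have e0 : p 0 - q 0 = (s:ℝ) := by rw [hp0, hq0, hs]; push_cast; ring
    have e1 : p 1 - q 1 = (t:ℝ) := by rw [hp1, hq1, ht]; push_cast; ring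
    simp only [Pi.sub_apply] at hcon
    have hst : ¬(s = 0 ∧ t = 0) := by
      rintro ⟨hs0, ht0⟩
      apply hne
      funext j
      fin_cases j
      · have : (s:ℝ) = 0 := by exact_mod_cast hs0
        show q 0 = p 0
        linarith [e0]
      · have : (t:ℝ) = 0 := by exact_mod_cast ht0
        show q 1 = p 1
        linarith [e1]
    have hS : (0:ℤ) ≤ 2*s + t := by
      have : (0:ℝ) ≤ 2*(s:ℝ) + t := by linarith [hcon.1, e0, e1]
      exact_mod_cast this
    have hT : (0:ℤ) ≤ s + 2*t := by
      have : (0:ℝ) ≤ (s:ℝ) + 2*t := by linarith [hcon.2, e0, e1]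
      exact_mod_cast this
    have hcase : (3 ≤ 2*s + t) ∨ (3 ≤ s + 2*t) ∨
        (1 ≤ 2*s + t ∧ 2 ≤ s + 2*t) ∨ (2 ≤ 2*s + t ∧ 1 ≤ s + 2*t) := by
      omega
    have cq1 := hqc.1
    have cq2 := hqc.2
    rcases hcase with hA | hA | ⟨hA, hB⟩ | ⟨hA, hB⟩
    · have : (3:ℝ) ≤ 2*(s:ℝ) + t := by exact_mod_cast hA
      linarith [e0, e1]
    · have : (3:ℝ) ≤ (s:ℝ) + 2*t := by exact_mod_cast hA
      linarith [e0, e1]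
    · have hA' : (1:ℝ) ≤ 2*(s:ℝ) + t := by exact_mod_cast hA
      have hB' : (2:ℝ) ≤ (s:ℝ) + 2*t := by exact_mod_cast hB
      exact h5 ⟨by linarith [e0, e1], by linarith [e0, e1]⟩
    · have hA' : (2:ℝ) ≤ 2*(s:ℝ) + t := by exact_mod_cast hA
      have hB' : (1:ℝ) ≤ (s:ℝ) + 2*t := by exact_mod_cast hB
      exact h6 ⟨by linarith [e0, e1], by linarith [e0, e1]⟩

lemma funext2 {f g : Fin 2 → ℝ} (h0 : f 0 = g 0) (h1 : f 1 = g 1) : f = g := by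
  funext j
  fin_cases j
  · exact h0
  · exact h1

lemma apex_set_eq (a b ra rb : ℝ) (k l : ℤ)
    (ha : a = k + ra) (hb : b = l + rb)
    (hc1 : 1 < 2*ra + rb) (hc2 : 2*ra + rb ≤ 2)
    (hd1 : 1 < ra + 2*rb) (hd2 : ra + 2*rb ≤ 2) :
    {x : Fin 2 → ℝ | IsApex hornG3 ![-a, -b] x} =
      {![-ra, 2 - rb], ![1 - ra, 1 - rb], ![2 - ra, -rb]} := by
  subst ha
  subst hb
  ext x
  simp only [Set.mem_setOf_eq, isApex_iff, Set.mem_insert_iff, Set.mem_singleton_iff]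
  constructor
  · rintro ⟨⟨m, rfl⟩, h1, h2, h3, h4, h5, h6⟩
    simp only [Matrix.cons_val_zero, Matrix.cons_val_one, Matrix.head_cons] at h1 h2 h3 h4 h5 h6
    have hM1 : 2 ≤ 2*(m 0) + (m 1) - 2*k - l := by
      have : (1:ℝ) < ((2*(m 0) + (m 1) - 2*k - l : ℤ) : ℝ) := by
        push_cast; linarith
      exact_mod_cast this
    have hM2 : 2*(m 0) + (m 1) - 2*k - l ≤ 4 := by
      have h' : ((2*(m 0) + (m 1) - 2*k - l : ℤ) : ℝ) < 5 := by
        push_cast; linarith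
      have : (2*(m 0) + (m 1) - 2*k - l : ℤ) < 5 := by exact_mod_cast h'
      omega
    have hN1 : 2 ≤ (m 0) + 2*(m 1) - k - 2*l := by
      have : (1:ℝ) < (((m 0) + 2*(m 1) - k - 2*l : ℤ) : ℝ) := by
        push_cast; linarith
      exact_mod_cast this
    have hN2 : (m 0) + 2*(m 1) - k - 2*l ≤ 4 := by
      have h' : (((m 0) + 2*(m 1) - k - 2*l : ℤ) : ℝ) < 5 := by
        push_cast; linarith
      have : ((m 0) + 2*(m 1) - k - 2*l : ℤ) < 5 := by exact_mod_cast h'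
      omega
    have hMN1 : ¬(3 ≤ 2*(m 0) + (m 1) - 2*k - l ∧ 4 ≤ (m 0) + 2*(m 1) - k - 2*l) := by
      rintro ⟨hA, hB⟩
      have hA' : (3:ℝ) ≤ ((2*(m 0) + (m 1) - 2*k - l : ℤ) : ℝ) := by exact_mod_cast hA
      have hB' : (4:ℝ) ≤ (((m 0) + 2*(m 1) - k - 2*l : ℤ) : ℝ) := by exact_mod_cast hB
      push_cast at hA' hB'
      exact h5 ⟨by linarith, by linarith⟩
    have hMN2 : ¬(4 ≤ 2*(m 0) + (m 1) - 2*k - l ∧ 3 ≤ (m 0) + 2*(m 1) - k - 2*l) := by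
      rintro ⟨hA, hB⟩
      have hA' : (4:ℝ) ≤ ((2*(m 0) + (m 1) - 2*k - l : ℤ) : ℝ) := by exact_mod_cast hA
      have hB' : (3:ℝ) ≤ (((m 0) + 2*(m 1) - k - 2*l : ℤ) : ℝ) := by exact_mod_cast hB
      push_cast at hA' hB'
      exact h6 ⟨by linarith, by linarith⟩
    have hsol : ((m 0) = k ∧ (m 1) = l + 2) ∨ ((m 0) = k + 1 ∧ (m 1) = l + 1) ∨
        ((m 0) = k + 2 ∧ (m 1) = l) := by omega
    rcases hsol with ⟨e1, e2⟩ | ⟨e1, e2⟩ | ⟨e1, e2⟩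
    · left
      apply funext2 <;>
        simp only [Matrix.cons_val_zero, Matrix.cons_val_one, Matrix.head_cons, e1, e2] <;>
        push_cast <;> ring
    · right; left
      apply funext2 <;>
        simp only [Matrix.cons_val_zero, Matrix.cons_val_one, Matrix.head_cons, e1, e2] <;>
        push_cast <;> ring
    · right; right
      apply funext2 <;>
        simp only [Matrix.cons_val_zero, Matrix.cons_val_one, Matrix.head_cons, e1, e2] <;>
        push_cast <;> ring
  · have main : ∀ u v : ℤ, x = ![(u:ℝ) - ((k:ℝ) + ra), (v:ℝ) - ((l:ℝ) + rb)] →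
        (∃ m : Fin 2 → ℤ, x = fun j => ![-((k:ℝ) + ra), -((l:ℝ) + rb)] j + (m j : ℝ)) := by
      intro u v hx
      exact ⟨![u, v], by
        rw [hx]
        apply funext2 <;>
          simp only [Matrix.cons_val_zero, Matrix.cons_val_one, Matrix.head_cons] <;> ring⟩
    rintro (rfl | rfl | rfl)
    · refine ⟨main k (l + 2) ?_, ?_, ?_, ?_, ?_, ?_, ?_⟩
      · apply funext2 <;>
          simp only [Matrix.cons_val_zero, Matrix.cons_val_one, Matrix.head_cons] <;>
          push_cast <;> ring
      all_goals simp only [Matrix.cons_val_zero, Matrix.cons_val_one, Matrix.head_cons]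
      · linarith
      · linarith
      · linarith
      · linarith
      · rintro ⟨hA, hB⟩; linarith
      · rintro ⟨hA, hB⟩; linarith
    · refine ⟨main (k + 1) (l + 1) ?_, ?_, ?_, ?_, ?_, ?_, ?_⟩
      · apply funext2 <;>
          simp only [Matrix.cons_val_zero, Matrix.cons_val_one, Matrix.head_cons] <;>
          push_cast <;> ring
      all_goals simp only [Matrix.cons_val_zero, Matrix.cons_val_one, Matrix.head_cons]
      · linarith
      · linarith
      · linarith
      · linarith
      · rintro ⟨hA, hB⟩; linarith
      · rintro ⟨hA, hB⟩; linarith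
    · refine ⟨main (k + 2) l ?_, ?_, ?_, ?_, ?_, ?_, ?_⟩
      · apply funext2 <;>
          simp only [Matrix.cons_val_zero, Matrix.cons_val_one, Matrix.head_cons] <;>
          push_cast <;> ring
      all_goals simp only [Matrix.cons_val_zero, Matrix.cons_val_one, Matrix.head_cons]
      · linarith
      · linarith
      · linarith
      · linarith
      · rintro ⟨hA, hB⟩; linarith
      · rintro ⟨hA, hB⟩; linarith

lemma apex_count (a b ra rb : ℝ) (k l : ℤ)
    (ha : a = k + ra) (hb : b = l + rb)
    (hc1 : 1 < 2*ra + rb) (hc2 : 2*ra + rb ≤ 2)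
    (hd1 : 1 < ra + 2*rb) (hd2 : ra + 2*rb ≤ 2) :
    {x : Fin 2 → ℝ | IsApex hornG3 ![-a, -b] x}.Finite ∧
    {x : Fin 2 → ℝ | IsApex hornG3 ![-a, -b] x}.ncard = 3 := by
  rw [apex_set_eq a b ra rb k l ha hb hc1 hc2 hd1 hd2]
  have h12 : (![-ra, 2 - rb] : Fin 2 → ℝ) ≠ ![1 - ra, 1 - rb] := by
    intro h
    have := congrFun h 0
    simp only [Matrix.cons_val_zero] at this
    linarith
  have h13 : (![-ra, 2 - rb] : Fin 2 → ℝ) ≠ ![2 - ra, -rb] := by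
    intro h
    have := congrFun h 0
    simp only [Matrix.cons_val_zero] at this
    linarith
  have h23 : (![1 - ra, 1 - rb] : Fin 2 → ℝ) ≠ ![2 - ra, -rb] := by
    intro h
    have := congrFun h 0
    simp only [Matrix.cons_val_zero] at this
    linarith
  refine ⟨Set.toFinite _, ?_⟩
  rw [Set.ncard_insert_of_notMem (by simp [h12, h13]) (Set.toFinite _),
      Set.ncard_insert_of_notMem (by simp [h23]) (Set.toFinite _),
      Set.ncard_singleton]


/-- for the Horn G3 configuration, if `a ≡ 1/2` and `b ≡ 1/3` or `2/3 (mod ℤ)`,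
or vice versa, then `K_{(-a,-b)}` has exactly three apexpoints. -/
theorem hornG3_three_apexpoints (a b : ℝ)
    (h : ((∃ n : ℤ, a - 1/2 = n) ∧ ((∃ n : ℤ, b - 1/3 = n) ∨ (∃ n : ℤ, b - 2/3 = n))) ∨
         (((∃ n : ℤ, a - 1/3 = n) ∨ (∃ n : ℤ, a - 2/3 = n)) ∧ (∃ n : ℤ, b - 1/2 = n))) :
    {x : Fin 2 → ℝ | IsApex hornG3 ![-a, -b] x}.Finite ∧
    {x : Fin 2 → ℝ | IsApex hornG3 ![-a, -b] x}.ncard = 3 := by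
  rcases h with ⟨⟨k, hk⟩, ⟨l, hl⟩ | ⟨l, hl⟩⟩ | ⟨⟨k, hk⟩ | ⟨k, hk⟩, ⟨l, hl⟩⟩
  · exact apex_count a b (1/2) (1/3) k l (by linarith) (by linarith)
      (by norm_num) (by norm_num) (by norm_num) (by norm_num)
  · exact apex_count a b (1/2) (2/3) k l (by linarith) (by linarith)
      (by norm_num) (by norm_num) (by norm_num) (by norm_num)
  · exact apex_count a b (1/3) (1/2) k l (by linarith) (by linarith)
      (by norm_num) (by norm_num) (by norm_num) (by norm_num)
  · exact apex_count a b (2/3) (1/2) k l (by linarith) (by linarith)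
      (by norm_num) (by norm_num) (by norm_num) (by norm_num)
end
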